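/- Back-and-forth property of the distribution-monad gluing: given maps E → X, Y → X, and π : Z → Y (yielding Z → X by composition), for any p ∈ D(E) and q ∈ D(Z) whose pushforwards to D(X) agree, one has m(m(p, D(π)(q)), q) = m(p, q), where the left side glues p first with the pushforward of q to Y and then with q itself. -/

import Mathlib

open scoped BigOperators

noncomputable def pushforward {X Y : Type} (f : X → Y) (p : X → ℝ) : Y → ℝ :=
  fun y => ∑ᶠ x ∈ f ⁻¹' {y}, p x

def IsDist {X : Type} (p : X → ℝ) : Prop :=
  (∀ x, 0 ≤ p x) ∧ (Function.support p).Finite ∧ ∑ᶠ x, p x = 1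

noncomputable def glue {X Y Z : Type} (f : X → Z) (g : Y → Z)
    (p : X → ℝ) (q : Y → ℝ) : {w : X × Y // f w.1 = g w.2} → ℝ :=
  fun w => p w.1.1 * q w.1.2 / pushforward f p (f w.1.1)

/-- A single value is at most the pushforward at its image, for nonneg finitely
supported functions. -/
lemma le_pushforward_apply {X Y : Type} (f : X → Y) (p : X → ℝ)
    (hnn : ∀ x, 0 ≤ p x) (hfin : (Function.support p).Finite) (x : X) :
    p x ≤ pushforward f p (f x) := by
  unfold pushforward
  have hfin' : ((f ⁻¹' {f x}) ∩ Function.support p).Finite := hfin.inter_of_right _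
  rw [finsum_mem_eq_sum _ hfin']
  by_cases hx : p x = 0
  · rw [hx]
    exact Finset.sum_nonneg fun i _ => hnn i
  · exact Finset.single_le_sum (fun i _ => hnn i)
      (by simp [Set.Finite.mem_toFinset, hx])

/-- Factor a constant out of a set-finsum. -/
lemma finsum_mem_mul_const {A : Type} (s : Set A) (f : A → ℝ) (r : ℝ)
    (h : (Function.support f).Finite) :
    ∑ᶠ a ∈ s, f a * r = (∑ᶠ a ∈ s, f a) * r := by
  rw [finsum_mem_def, finsum_mem_def, finsum_mul]
  congr 1
  funext a
  by_cases ha : a ∈ s <;> simp [Set.indicator, ha]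

/-- Computation of the pushforward of the inner gluing along the projection to `Y`. -/
lemma pushforward_glue {E X Y : Type} (e : E → X) (u : Y → X)
    (p : E → ℝ) (Q : Y → ℝ) (hfin : (Function.support p).Finite) (y0 : Y) :
    pushforward (fun w : {w : E × Y // e w.1 = u w.2} => w.1.2)
      (glue e u p Q) y0
    = pushforward e p (u y0) * Q y0 / pushforward e p (u y0) := by
  unfold pushforward glue
  have hbij : Set.BijOn (fun w : {w : E × Y // e w.1 = u w.2} => w.1.1)
      ((fun w : {w : E × Y // e w.1 = u w.2} => w.1.2) ⁻¹' {y0})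
      (e ⁻¹' {u y0}) := by
    refine ⟨fun w hw => ?_, fun w hw w' hw' hww' => ?_, fun a ha => ?_⟩
    · have h2 : w.1.2 = y0 := hw
      simp only [Set.mem_preimage, Set.mem_singleton_iff, w.2, h2]
    · have h2 : w.1.2 = y0 := hw
      have h2' : w'.1.2 = y0 := hw'
      ext
      · exact hww'
      · rw [h2, h2']
    · exact ⟨⟨(a, y0), ha⟩, rfl, rfl⟩
  rw [finsum_mem_eq_of_bijOn _ hbij (fun w hw => ?_)]
  · have := finsum_mem_mul_const (e ⁻¹' {u y0}) p (Q y0 / pushforward e p (u y0)) hfin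
    simp only [mul_div_assoc]
    rw [this]
    rfl
  · have h2 : w.1.2 = y0 := hw
    rw [w.2, h2, mul_div_assoc]

theorem glue_back_and_forth {E X Y Z : Type}
    (e : E → X) (u : Y → X) (π : Z → Y)
    (p : E → ℝ) (q : Z → ℝ) (hp : IsDist p) (hq : IsDist q)
    (hpq : pushforward e p = pushforward (u ∘ π) q) :
    ∀ (a : E) (z : Z) (h1 : e a = u (π z)),
      glue (fun w : {w : E × Y // e w.1 = u w.2} => w.1.2) π
          (glue e u p (pushforward π q)) q
        ⟨(⟨(a, π z), h1⟩, z), rfl⟩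
      = glue e (u ∘ π) p q ⟨(a, z), h1⟩ := by
  intro a z h1
  have hS := pushforward_glue e u p (pushforward π q) hp.2.1 (π z)
  simp only [glue] at *
  rw [hS]
  have hea : e a = u (π z) := h1
  rw [hea]
  set C := pushforward e p (u (π z)) with hC
  set Q := pushforward π q (π z) with hQ
  by_cases hCz : C = 0
  · simp [hCz]
  · rw [mul_div_cancel_left₀ Q hCz]
    by_cases hQz : Q = 0
    · have hqz : q z = 0 := by
        have := le_pushforward_apply π q hq.1 hq.2.1 z
        have h0 := hq.1 z
        rw [← hQ] at this
        linarith [hQz ▸ this]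
      simp [hqz]
    · field_simp
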